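/- arXiv:1611.01939 — 2 statements merged into one kernel-verified Lean document; each statement's English description precedes it below -/
import Mathlib

section
/- Let σ_n > 0, σ_d > 0, 0 ≤ ρ < 1, z ≥ 0, and set b = σ_n²/σ_d². Then ∫₀^∞ (y / (4 σ_n² σ_d² (1−ρ))) · exp(−(z/σ_n² + 1/σ_d²) · y / (2(1−ρ))) · ∑_{k=0}^∞ (ρ z y² / ((1−ρ)² σ_n² σ_d²))ᵏ / (4ᵏ (k!)²) dy = (1−ρ) b ∑_{k=0}^∞ ((2k+1)!/(k!)²) (ρ b)ᵏ zᵏ / (z+b)^{2k+2}, where both the integral and the series on the right-hand side converge. -/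
open MeasureTheory

section Aux

lemma aux_integrable (n : ℕ) {τ : ℝ} (hτ : 0 < τ) :
    IntegrableOn (fun y : ℝ => y ^ n * Real.exp (-(τ * y))) (Set.Ioi 0) := by
  have h := integrableOn_rpow_mul_exp_neg_mul_rpow (p := 1) (s := n) (b := τ)
    ((by norm_num : (-1:ℝ) < 0).trans_le (Nat.cast_nonneg n)) one_pos hτ
  refine h.congr_fun (fun y hy => ?_) measurableSet_Ioi
  beta_reduce
  rw [Real.rpow_natCast, Real.rpow_one, neg_mul]

lemma aux_integral (n : ℕ) {τ : ℝ} (hτ : 0 < τ) :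
    ∫ y in Set.Ioi (0:ℝ), y ^ n * Real.exp (-(τ * y)) = (n.factorial : ℝ) / τ ^ (n + 1) := by
  have h := Real.integral_rpow_mul_exp_neg_mul_Ioi (a := (n:ℝ) + 1) (r := τ)
    (by positivity) hτ
  rw [show ((n:ℝ) + 1 - 1) = (n:ℝ) by ring] at h
  simp_rw [Real.rpow_natCast] at h
  rw [h, show ((n:ℝ) + 1) = ((n + 1 : ℕ) : ℝ) by push_cast; ring, Real.rpow_natCast]
  rw [show Real.Gamma ((n:ℕ) + 1 : ℕ) = Real.Gamma ((n:ℝ) + 1) by push_cast; ring_nf,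
    Real.Gamma_nat_eq_factorial, div_pow, one_pow]
  field_simp

lemma alg_core (ρ z b v A N fk c β : ℝ) (k : ℕ) (hv : v ≠ 0) (hzb : z + b ≠ 0)
    (hfk : fk ≠ 0) (hA : A ≠ 0)
    (hc : c = 4 ^ k * ((ρ * b) ^ k * z ^ k) / v ^ (2 * k))
    (hβ : β = v ^ 2 / A) :
    c / (4 ^ k * fk ^ 2) / A * (N / ((z + b) / v) ^ (2 * k + 2))
      = β * (N / fk ^ 2 * (ρ * b) ^ k * z ^ k / (z + b) ^ (2 * k + 2)) := by
  subst hc hβ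
  rw [div_pow]
  have h4 : ((4:ℝ))^k ≠ 0 := by positivity
  field_simp
  ring

lemma fact_bound (k : ℕ) :
    ((2*k+1).factorial : ℝ) / (k.factorial : ℝ)^2 ≤ ((k:ℝ)+1) * 4^k := by
  have h1 : (2*k+1).choose k * k.factorial * (k+1).factorial = (2*k+1).factorial := by
    have := Nat.choose_mul_factorial_mul_factorial (show k ≤ 2*k+1 by omega)
    rw [show 2*k+1-k = k+1 by omega] at this
    exact this
  have h2 : ((2*k+1).choose k : ℝ) ≤ 4^k := by
    exact_mod_cast Nat.cast_le.mpr (Nat.choose_middle_le_pow k)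
  rw [div_le_iff₀ (by positivity)]
  calc ((2*k+1).factorial:ℝ)
      = ((2*k+1).choose k : ℝ) * (k.factorial:ℝ) * ((k+1).factorial:ℝ) := by
        exact_mod_cast h1.symm
    _ ≤ (4^k : ℝ) * (k.factorial:ℝ) * ((k+1).factorial:ℝ) := by
        apply mul_le_mul_of_nonneg_right ?_ (by positivity)
        apply mul_le_mul_of_nonneg_right h2 (by positivity)
    _ = ((k:ℝ)+1) * 4^k * (k.factorial:ℝ)^2 := by
        rw [Nat.factorial_succ]; push_cast; ring

end Aux

set_option maxHeartbeats 1000000 in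
/-- The density-of-ratio integral of the proof of Theorem 2: for
`σ_n, σ_d > 0`, `0 ≤ ρ < 1`, `z ≥ 0`, and `b = σ_n²/σ_d²`,
`∫₀^∞ (y/(4σ_n²σ_d²(1−ρ))) e^{−(z/σ_n²+1/σ_d²)y/(2(1−ρ))}
  ∑ₖ (ρ z y²/((1−ρ)²σ_n²σ_d²))ᵏ/(4ᵏ(k!)²) dy
  = (1−ρ) b ∑ₖ ((2k+1)!/(k!)²) (ρb)ᵏ zᵏ/(z+b)^{2k+2}`,
with the integral and the right-hand series both convergent. -/
theorem density_of_ratio_integral (σn σd ρ z : ℝ) (hσn : 0 < σn) (hσd : 0 < σd)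
    (hρ0 : 0 ≤ ρ) (hρ1 : ρ < 1) (hz : 0 ≤ z) :
    let b : ℝ := σn ^ 2 / σd ^ 2
    let f : ℝ → ℝ := fun y =>
      y / (4 * σn ^ 2 * σd ^ 2 * (1 - ρ)) *
        Real.exp (-((z / σn ^ 2 + 1 / σd ^ 2) * y / (2 * (1 - ρ)))) *
        ∑' k : ℕ, (ρ * z * y ^ 2 / ((1 - ρ) ^ 2 * σn ^ 2 * σd ^ 2)) ^ k /
          (4 ^ k * (Nat.factorial k : ℝ) ^ 2)
    let g : ℕ → ℝ := fun k =>
      (Nat.factorial (2 * k + 1) : ℝ) / (Nat.factorial k : ℝ) ^ 2 *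
        (ρ * b) ^ k * z ^ k / (z + b) ^ (2 * k + 2)
    IntegrableOn f (Set.Ioi 0) ∧ Summable g ∧
      (∫ y in Set.Ioi (0 : ℝ), f y) = (1 - ρ) * b * ∑' k : ℕ, g k := by
  intro b f g
  have hb : b = σn ^ 2 / σd ^ 2 := rfl
  have hf : f = fun y =>
      y / (4 * σn ^ 2 * σd ^ 2 * (1 - ρ)) *
        Real.exp (-((z / σn ^ 2 + 1 / σd ^ 2) * y / (2 * (1 - ρ)))) *
        ∑' k : ℕ, (ρ * z * y ^ 2 / ((1 - ρ) ^ 2 * σn ^ 2 * σd ^ 2)) ^ k /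
          (4 ^ k * (Nat.factorial k : ℝ) ^ 2) := rfl
  have hg : g = fun k =>
      (Nat.factorial (2 * k + 1) : ℝ) / (Nat.factorial k : ℝ) ^ 2 *
        (ρ * b) ^ k * z ^ k / (z + b) ^ (2 * k + 2) := rfl
  clear_value b f g
  -- basic positivity facts
  have h1ρ : (0:ℝ) < 1 - ρ := by linarith
  have hσn' : σn ≠ 0 := hσn.ne'
  have hσd' : σd ≠ 0 := hσd.ne'
  have h1ρ' : (1:ℝ) - ρ ≠ 0 := h1ρ.ne'
  have hbpos : 0 < b := by rw [hb]; positivity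
  have hzb : (0:ℝ) < z + b := by linarith
  set τ : ℝ := (z / σn ^ 2 + 1 / σd ^ 2) / (2 * (1 - ρ)) with hτdef
  clear_value τ
  have hτpos : 0 < τ := by
    rw [hτdef]
    apply div_pos (add_pos_of_nonneg_of_pos (by positivity) (by positivity)) (by linarith)
  set v : ℝ := 2 * (1 - ρ) * σn ^ 2 with hv
  clear_value v
  have hvpos : 0 < v := by rw [hv]; nlinarith [pow_pos hσn 2]
  have hτv : τ = (z + b) / v := by
    have h2 : (0:ℝ) < 2 * (1 - ρ) := by linarith
    rw [hτdef, div_eq_div_iff h2.ne' hvpos.ne', hv, hb]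
    field_simp
  -- the summands
  set F : ℕ → ℝ → ℝ := fun k y =>
      y / (4 * σn ^ 2 * σd ^ 2 * (1 - ρ)) *
        Real.exp (-((z / σn ^ 2 + 1 / σd ^ 2) * y / (2 * (1 - ρ)))) *
        ((ρ * z * y ^ 2 / ((1 - ρ) ^ 2 * σn ^ 2 * σd ^ 2)) ^ k /
          (4 ^ k * (Nat.factorial k : ℝ) ^ 2)) with hFdef
  clear_value F
  set D : ℕ → ℝ := fun k =>
      (ρ * z / ((1 - ρ) ^ 2 * σn ^ 2 * σd ^ 2)) ^ k / (4 ^ k * (Nat.factorial k : ℝ) ^ 2) /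
        (4 * σn ^ 2 * σd ^ 2 * (1 - ρ)) with hDdef
  clear_value D
  have hfF : f = fun y => ∑' k, F k y := by
    rw [hf]
    funext y
    simp only [hFdef]
    exact tsum_mul_left.symm
  have hFeq : ∀ k, F k = fun y => D k * (y ^ (2*k+1) * Real.exp (-(τ * y))) := by
    intro k
    funext y
    simp only [hFdef, hDdef]
    rw [show (z / σn ^ 2 + 1 / σd ^ 2) * y / (2 * (1 - ρ)) = τ * y by rw [hτdef]; ring]
    ring
  have hFnn : ∀ k y, y ∈ Set.Ioi (0:ℝ) → 0 ≤ F k y := by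
    intro k y hy
    simp only [hFdef]
    apply mul_nonneg (mul_nonneg ?_ (Real.exp_nonneg _)) ?_
    · exact div_nonneg (le_of_lt hy) (by nlinarith [pow_pos hσn 2, pow_pos hσd 2])
    · apply div_nonneg (pow_nonneg ?_ _) (by positivity)
      exact div_nonneg (mul_nonneg (mul_nonneg hρ0 hz) (sq_nonneg y)) (by positivity)
  have hFm : ∀ k, Measurable (F k) := by
    intro k
    simp only [hFdef]
    fun_prop
  have hFint : ∀ k, IntegrableOn (F k) (Set.Ioi 0) := by
    intro k
    rw [hFeq k]
    exact (aux_integrable (2*k+1) hτpos).const_mul _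
  have hFval : ∀ k, ∫ y in Set.Ioi (0:ℝ), F k y
      = D k * (((2*k+1).factorial : ℝ) / τ ^ (2*k+2)) := by
    intro k
    simp only [hFeq k]
    rw [MeasureTheory.integral_const_mul, aux_integral (2*k+1) hτpos]
  -- the algebraic identity
  have hc' : ∀ k : ℕ, (ρ * z / ((1 - ρ) ^ 2 * σn ^ 2 * σd ^ 2)) ^ k
      = 4 ^ k * ((ρ * b) ^ k * z ^ k) / v ^ (2 * k) := by
    intro k
    refine (eq_div_iff (pow_ne_zero _ hvpos.ne')).mpr ?_
    calc (ρ * z / ((1 - ρ) ^ 2 * σn ^ 2 * σd ^ 2)) ^ k * v ^ (2 * k)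
        = ((ρ * z / ((1 - ρ) ^ 2 * σn ^ 2 * σd ^ 2)) * v ^ 2) ^ k := by
          rw [pow_mul, ← mul_pow]
      _ = (4 * (ρ * b * z)) ^ k := by
          congr 1
          rw [hv, hb]; field_simp; ring
      _ = 4 ^ k * ((ρ * b) ^ k * z ^ k) := by rw [mul_pow, mul_pow]
  have hβ : (1 - ρ) * b = v ^ 2 / (4 * σn ^ 2 * σd ^ 2 * (1 - ρ)) := by
    rw [hv, hb]; field_simp; ring
  have key : ∀ k, D k * (((2*k+1).factorial : ℝ) / τ ^ (2*k+2)) = (1 - ρ) * b * g k := by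
    intro k
    rw [hg]
    simp only [hDdef]
    rw [hτv]
    exact alg_core ρ z b v (4 * σn ^ 2 * σd ^ 2 * (1 - ρ)) _ _ _ _ k hvpos.ne' hzb.ne'
      (by positivity) (by nlinarith [pow_pos hσn 2, pow_pos hσd 2]) (hc' k) hβ
  -- nonnegativity and summability of g
  have hgnn : ∀ k, 0 ≤ g k := by
    intro k
    rw [hg]
    exact div_nonneg (mul_nonneg (mul_nonneg (by positivity)
      (pow_nonneg (mul_nonneg hρ0 hbpos.le) k)) (pow_nonneg hz k)) (pow_nonneg hzb.le _)
  set q : ℝ := ρ * b * z / (z + b) ^ 2 with hqdef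
  clear_value q
  have hq0 : 0 ≤ q := by
    rw [hqdef]
    exact div_nonneg (mul_nonneg (mul_nonneg hρ0 hbpos.le) hz) (sq_nonneg _)
  have h4q : 4 * q < 1 := by
    have hlt : 4 * (ρ * b * z) < (z + b) ^ 2 := by
      nlinarith [mul_pos h1ρ (mul_pos hzb hzb), mul_nonneg hρ0 (sq_nonneg (z - b))]
    have : 4 * q = 4 * (ρ * b * z) / (z + b) ^ 2 := by rw [hqdef]; ring
    rw [this]
    exact (div_lt_one (by positivity)).mpr hlt
  have hqk : ∀ k : ℕ, q ^ k = (ρ * b) ^ k * z ^ k / (z + b) ^ (2 * k) := by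
    intro k
    rw [hqdef, div_pow, ← pow_mul, mul_pow]
  have hgq : ∀ k, g k = ((2*k+1).factorial : ℝ) / (k.factorial : ℝ)^2 * q ^ k / (z + b) ^ 2 := by
    intro k
    simp only [hg]
    rw [hqk, pow_add, ← div_div]
    ring
  have hmaj : Summable (fun k : ℕ => ((k:ℝ)+1) * 4 ^ k * q ^ k / (z + b) ^ 2) := by
    have hr : ‖4 * q‖ < 1 := by
      rw [Real.norm_eq_abs, abs_of_nonneg (by linarith [mul_nonneg (by norm_num : (0:ℝ) ≤ 4) hq0])]
      exact h4q
    have s1 := summable_pow_mul_geometric_of_norm_lt_one (R := ℝ) 1 hr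
    have s2 : Summable (fun k : ℕ => (4 * q) ^ k) := summable_geometric_of_norm_lt_one hr
    have s3 : Summable (fun k : ℕ => ((k:ℝ)+1) * (4 * q) ^ k) := by
      have := s1.add s2
      refine this.congr (fun k => ?_)
      simp [pow_one]
      ring
    have s4 : (fun k : ℕ => ((k:ℝ)+1) * 4 ^ k * q ^ k) = fun k : ℕ => ((k:ℝ)+1) * (4 * q) ^ k := by
      funext k; rw [mul_pow]; ring
    have s5 : Summable (fun k : ℕ => ((k:ℝ)+1) * 4 ^ k * q ^ k) := by rw [s4]; exact s3
    exact s5.div_const _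
  have hgle : ∀ k, g k ≤ ((k:ℝ)+1) * 4 ^ k * q ^ k / (z + b) ^ 2 := by
    intro k
    rw [hgq k]
    have h1 : (0:ℝ) < (z + b) ^ 2 := by positivity
    refine (div_le_div_iff_of_pos_right h1).mpr ?_
    exact mul_le_mul_of_nonneg_right (fact_bound k) (pow_nonneg hq0 k)
  have hSg : Summable g := Summable.of_nonneg_of_le hgnn hgle hmaj
  -- summability of the integrals
  have hIeq : (fun k => ∫ y in Set.Ioi (0:ℝ), F k y) = fun k => (1 - ρ) * b * g k :=
    funext fun k => (hFval k).trans (key k)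
  have hIsum : Summable (fun k => ∫ y in Set.Ioi (0:ℝ), F k y) := by
    rw [hIeq]; exact hSg.mul_left _
  -- pointwise summability
  have hS : ∀ y : ℝ, Summable (fun k : ℕ =>
      (ρ * z * y ^ 2 / ((1 - ρ) ^ 2 * σn ^ 2 * σd ^ 2)) ^ k /
        (4 ^ k * (Nat.factorial k : ℝ) ^ 2)) := by
    intro y
    obtain ⟨w, hw⟩ : ∃ w : ℝ, w = ρ * z * y ^ 2 / ((1 - ρ) ^ 2 * σn ^ 2 * σd ^ 2) := ⟨_, rfl⟩
    rw [← hw]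
    have hw0 : 0 ≤ w := by
      rw [hw]
      exact div_nonneg (mul_nonneg (mul_nonneg hρ0 hz) (sq_nonneg y)) (by positivity)
    refine Summable.of_nonneg_of_le (fun k => ?_) (fun k => ?_)
      (Real.summable_pow_div_factorial (w/4))
    · exact div_nonneg (pow_nonneg hw0 _) (by positivity)
    · have e : w ^ k / (4 ^ k * (k.factorial : ℝ)^2) = (w/4) ^ k / (k.factorial : ℝ)^2 := by
        rw [div_pow, div_div]
      rw [e]
      have hk1 : (1:ℝ) ≤ (k.factorial : ℝ) := by exact_mod_cast k.factorial_pos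
      apply div_le_div_of_nonneg_left (pow_nonneg (by positivity) k) (by positivity)
      nlinarith
  have hFsummable : ∀ y, Summable (fun k => F k y) := by
    intro y
    simp only [hFdef]
    exact (hS y).mul_left _
  -- measurability of f
  have hfm : Measurable f := by
    rw [hfF]
    have hpart : ∀ n : ℕ, Measurable (fun y => ∑ k ∈ Finset.range n, F k y) :=
      fun n => Finset.measurable_sum _ (fun k _ => hFm k)
    refine measurable_of_tendsto_metrizable' Filter.atTop hpart ?_
    rw [tendsto_pi_nhds]
    intro y
    exact (hFsummable y).hasSum.tendsto_sum_nat
  have hfnn : ∀ y ∈ Set.Ioi (0:ℝ), 0 ≤ f y := by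
    intro y hy
    rw [hfF]
    exact tsum_nonneg (fun k => hFnn k y hy)
  -- integrability of f
  have hfint : IntegrableOn f (Set.Ioi 0) := by
    refine ⟨hfm.aestronglyMeasurable, ?_⟩
    rw [hasFiniteIntegral_iff_norm]
    calc ∫⁻ y in Set.Ioi (0:ℝ), ENNReal.ofReal ‖f y‖
        = ∫⁻ y in Set.Ioi (0:ℝ), ∑' k, ENNReal.ofReal (F k y) := by
          refine lintegral_congr_ae ((ae_restrict_iff' measurableSet_Ioi).mpr
            (Filter.Eventually.of_forall (fun y hy => ?_)))
          show ENNReal.ofReal ‖f y‖ = ∑' k, ENNReal.ofReal (F k y)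
          rw [Real.norm_of_nonneg (hfnn y hy), hfF]
          exact ENNReal.ofReal_tsum_of_nonneg (fun k => hFnn k y hy) (hFsummable y)
      _ = ∑' k, ∫⁻ y in Set.Ioi (0:ℝ), ENNReal.ofReal (F k y) :=
          lintegral_tsum (fun k => ((hFm k).ennreal_ofReal).aemeasurable)
      _ = ∑' k, ENNReal.ofReal (∫ y in Set.Ioi (0:ℝ), F k y) := by
          refine tsum_congr (fun k => ?_)
          exact (ofReal_integral_eq_lintegral_ofReal (hFint k)
            ((ae_restrict_iff' measurableSet_Ioi).mpr
              (Filter.Eventually.of_forall (fun y hy => hFnn k y hy)))).symm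
      _ = ENNReal.ofReal (∑' k, ∫ y in Set.Ioi (0:ℝ), F k y) :=
          (ENNReal.ofReal_tsum_of_nonneg
            (fun k => setIntegral_nonneg measurableSet_Ioi (fun y hy => hFnn k y hy)) hIsum).symm
      _ < ⊤ := ENNReal.ofReal_lt_top
  refine ⟨hfint, hSg, ?_⟩
  -- the integral identity
  have hnorm : (fun k => ∫ y in Set.Ioi (0:ℝ), ‖F k y‖) = fun k => ∫ y in Set.Ioi (0:ℝ), F k y := by
    funext k
    refine setIntegral_congr_fun measurableSet_Ioi (fun y hy => ?_)
    exact Real.norm_of_nonneg (hFnn k y hy)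
  have hswap := MeasureTheory.integral_tsum_of_summable_integral_norm hFint (by rw [hnorm]; exact hIsum)
  calc (∫ y in Set.Ioi (0:ℝ), f y) = ∫ y in Set.Ioi (0:ℝ), ∑' k, F k y := by rw [hfF]
    _ = ∑' k, ∫ y in Set.Ioi (0:ℝ), F k y := hswap.symm
    _ = ∑' k, (1 - ρ) * b * g k := by rw [hIeq]
    _ = (1 - ρ) * b * ∑' k, g k := tsum_mul_left
end

section
/- Let b > 0, 0 ≤ ρ < 1, and z ≥ 0. Then ∫₀^z (1−ρ) b ∑_{k=0}^∞ ((2k+1)!/(k!)²) (ρ b)ᵏ xᵏ / (x+b)^{2k+2} dx = (1−ρ) b ∑_{k=0}^∞ ((2k+1)!/(k!)²) (ρ b)ᵏ ∑_{i=0}^k C(k,i) (−b)^{k−i} / (i−2k−1) · ((z+b)^{i−2k−1} − b^{i−2k−1}), where the series on both sides converge. -/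
open MeasureTheory intervalIntegral Finset


lemma aux_antideriv (b : ℝ) (hb : 0 < b) (k : ℕ) (z : ℝ) (hz : 0 ≤ z) :
    ∫ x in (0:ℝ)..z, x ^ k / (x + b) ^ (2 * k + 2)
      = ∑ i ∈ Finset.range (k + 1),
          (k.choose i : ℝ) * (-b) ^ (k - i) / ((i : ℝ) - 2 * k - 1) *
            ((z + b) ^ ((i : ℤ) - 2 * k - 1) - b ^ ((i : ℤ) - 2 * k - 1)) := by
  set F : ℝ → ℝ := fun x => ∑ i ∈ Finset.range (k + 1),
      (k.choose i : ℝ) * (-b) ^ (k - i) / ((i : ℝ) - 2 * k - 1) * (x + b) ^ ((i : ℤ) - 2 * k - 1)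
    with hF
  have key : ∀ x ∈ Set.uIcc (0:ℝ) z, HasDerivAt F (x ^ k / (x + b) ^ (2 * k + 2)) x := by
    intro x hx
    have hx0 : 0 ≤ x := by
      rcases Set.mem_uIcc.mp hx with h | h
      · exact h.1
      · linarith [h.1]
    have hxb : 0 < x + b := by linarith
    have hne : x + b ≠ 0 := ne_of_gt hxb
    have hder : ∀ i ∈ Finset.range (k + 1),
        HasDerivAt (fun y : ℝ => (k.choose i : ℝ) * (-b) ^ (k - i) / ((i : ℝ) - 2 * k - 1)
            * (y + b) ^ ((i : ℤ) - 2 * k - 1))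
          ((k.choose i : ℝ) * (-b) ^ (k - i) * (x + b) ^ ((i : ℤ) - 2 * k - 2)) x := by
      intro i hi
      have hik : (i : ℝ) ≤ k := by
        exact_mod_cast Nat.lt_succ_iff.mp (Finset.mem_range.mp hi)
      have hm : ((i : ℝ) - 2 * k - 1) ≠ 0 := by
        have : (0:ℝ) ≤ k := Nat.cast_nonneg k
        intro h; nlinarith
      have h1 : HasDerivAt (fun y : ℝ => (y + b) ^ ((i : ℤ) - 2 * k - 1))
          ((((i : ℤ) - 2 * k - 1) : ℝ) * (x + b) ^ ((i : ℤ) - 2 * k - 1 - 1)) x := by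
        have h0 : HasDerivAt (fun y : ℝ => y + b) 1 x := (hasDerivAt_id x).add_const b
        simpa [Function.comp_def] using (hasDerivAt_zpow ((i : ℤ) - 2 * k - 1) (x + b) (Or.inl hne)).comp x h0
      have h2 := h1.const_mul ((k.choose i : ℝ) * (-b) ^ (k - i) / ((i : ℝ) - 2 * k - 1))
      refine h2.congr_deriv ?_
      have hcast : (((i : ℤ) - 2 * k - 1) : ℝ) = (i : ℝ) - 2 * k - 1 := by push_cast; ring
      have hexp : (i : ℤ) - 2 * k - 1 - 1 = (i : ℤ) - 2 * k - 2 := by ring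
      rw [hcast, hexp]
      field_simp
    have hsum := HasDerivAt.fun_sum hder
    have : F = fun y => ∑ i ∈ Finset.range (k + 1),
        (k.choose i : ℝ) * (-b) ^ (k - i) / ((i : ℝ) - 2 * k - 1) * (y + b) ^ ((i : ℤ) - 2 * k - 1) := hF
    rw [this]
    refine hsum.congr_deriv ?_
    -- show x ^ k / (x + b) ^ (2 * k + 2) = ∑ ...
    have hzp : ∀ i : ℕ, (x + b) ^ ((i : ℤ) - 2 * k - 2)
        = (x + b) ^ i / (x + b) ^ (2 * k + 2) := by
      intro i
      rw [eq_div_iff (pow_ne_zero _ hne)]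
      rw [← zpow_natCast (x+b) i, ← zpow_natCast (x+b) (2*k+2), ← zpow_add₀ hne]
      congr 1
      push_cast; ring
    rw [Finset.sum_congr rfl (fun i _ => by rw [hzp i])]
    have hstep : ∑ i ∈ Finset.range (k + 1),
        (k.choose i : ℝ) * (-b) ^ (k - i) * ((x + b) ^ i / (x + b) ^ (2 * k + 2))
        = (∑ i ∈ Finset.range (k + 1),
            (k.choose i : ℝ) * (-b) ^ (k - i) * (x + b) ^ i) / (x + b) ^ (2 * k + 2) := by
      rw [Finset.sum_div]
      exact Finset.sum_congr rfl (fun i _ => by ring)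
    rw [hstep]
    congr 1
    have := add_pow (x + b) (-b) k
    have hx' : ((x + b) + (-b)) = x := by ring
    rw [hx'] at this
    rw [this]
    exact Finset.sum_congr rfl (fun i hi => by ring)
  have hcont : ContinuousOn (fun x : ℝ => x ^ k / (x + b) ^ (2 * k + 2)) (Set.uIcc 0 z) := by
    apply ContinuousOn.div (continuousOn_pow k) ((continuousOn_id.add continuousOn_const).pow _)
    intro x hx
    have hx0 : 0 ≤ x := by
      rcases Set.mem_uIcc.mp hx with h | h
      · exact h.1
      · linarith [h.1]
    exact pow_ne_zero _ (by dsimp; linarith)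
  have := intervalIntegral.integral_eq_sub_of_hasDerivAt key (hcont.intervalIntegrable)
  rw [this, hF]
  simp only [zero_add]
  rw [← Finset.sum_sub_distrib]
  exact Finset.sum_congr rfl (fun i hi => by ring)


lemma aux_fact (k : ℕ) : (Nat.factorial (2 * k + 1) : ℝ) / (Nat.factorial k : ℝ) ^ 2
    = (2 * k + 1) * ((2 * k).choose k : ℝ) := by
  have h := Nat.choose_mul_factorial_mul_factorial (Nat.le_mul_of_pos_left k (by norm_num) : k ≤ 2 * k)
  have h2 : 2 * k - k = k := by omega
  rw [h2] at h
  have hf : (Nat.factorial (2 * k + 1) : ℝ) = (2 * k + 1) * (Nat.factorial (2 * k)) := by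
    rw [Nat.factorial_succ]; push_cast; ring
  have hcast : ((Nat.factorial (2 * k)) : ℝ) = ((2 * k).choose k : ℝ) * (Nat.factorial k) * (Nat.factorial k) := by
    exact_mod_cast congrArg (Nat.cast (R := ℝ)) h.symm
  have hk : (Nat.factorial k : ℝ) ≠ 0 := by positivity
  rw [hf, hcast]
  field_simp

lemma aux_choose (k : ℕ) : ((2 * k).choose k : ℝ) ≤ 4 ^ k := by
  have h1 : (2 * k).choose k ≤ ∑ i ∈ Finset.range (2 * k + 1), (2 * k).choose i :=
    Finset.single_le_sum (f := fun i => (2 * k).choose i) (fun i _ => Nat.zero_le _)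
      (Finset.mem_range.mpr (by omega))
  rw [Nat.sum_range_choose] at h1
  have : ((2:ℕ) ^ (2 * k) : ℝ) = 4 ^ k := by
    rw [pow_mul]; norm_num
  calc ((2 * k).choose k : ℝ) ≤ ((2:ℕ) ^ (2 * k) : ℝ) := by exact_mod_cast h1
    _ = 4 ^ k := this

lemma aux_bound (b ρ : ℝ) (hb : 0 < b) (hρ0 : 0 ≤ ρ) (k : ℕ) (x : ℝ) (hx : 0 ≤ x) :
    (Nat.factorial (2 * k + 1) : ℝ) / (Nat.factorial k : ℝ) ^ 2 *
      (ρ * b) ^ k * x ^ k / (x + b) ^ (2 * k + 2) ≤ (2 * k + 1) * ρ ^ k / b ^ 2 := by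
  have hxb : 0 < x + b := by linarith
  have hnum : (ρ * b) ^ k * x ^ k ≤ ρ ^ k * ((x + b) ^ 2 / 4) ^ k := by
    rw [← mul_pow, ← mul_pow]
    apply pow_le_pow_left₀ (by positivity)
    have h4 : b * x ≤ (x + b) ^ 2 / 4 := by nlinarith [sq_nonneg (x - b)]
    nlinarith [mul_le_mul_of_nonneg_left h4 hρ0]
  have hkey : (Nat.factorial (2 * k + 1) : ℝ) / (Nat.factorial k : ℝ) ^ 2 *
      ((ρ * b) ^ k * x ^ k) ≤ (2 * k + 1) * ρ ^ k * (x + b) ^ (2 * k) := by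
    rw [aux_fact]
    calc (2 * (k:ℝ) + 1) * ((2 * k).choose k : ℝ) * ((ρ * b) ^ k * x ^ k)
        ≤ (2 * (k:ℝ) + 1) * 4 ^ k * (ρ ^ k * ((x + b) ^ 2 / 4) ^ k) := by
          apply mul_le_mul
          · apply mul_le_mul_of_nonneg_left (aux_choose k) (by positivity)
          · exact hnum
          · positivity
          · positivity
      _ = (2 * (k:ℝ) + 1) * ρ ^ k * (x + b) ^ (2 * k) := by
          rw [div_pow, pow_mul]
          field_simp
  rw [div_le_div_iff₀ (by positivity) (by positivity)]
  have hexp : (x + b) ^ (2 * k + 2) = (x + b) ^ (2 * k) * (x + b) ^ 2 := by ring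
  calc (Nat.factorial (2 * k + 1) : ℝ) / (Nat.factorial k : ℝ) ^ 2 * (ρ * b) ^ k * x ^ k * b ^ 2
      = ((Nat.factorial (2 * k + 1) : ℝ) / (Nat.factorial k : ℝ) ^ 2 * ((ρ * b) ^ k * x ^ k)) * b ^ 2 := by ring
    _ ≤ ((2 * k + 1) * ρ ^ k * (x + b) ^ (2 * k)) * b ^ 2 := by
        apply mul_le_mul_of_nonneg_right hkey (by positivity)
    _ ≤ ((2 * k + 1) * ρ ^ k * (x + b) ^ (2 * k)) * (x + b) ^ 2 := by
        apply mul_le_mul_of_nonneg_left (by nlinarith) (by positivity)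
    _ = (2 * k + 1) * ρ ^ k * ((x + b) ^ (2 * k + 2)) := by rw [hexp]; ring

lemma aux_summable_bound (ρ : ℝ) (hρ0 : 0 ≤ ρ) (hρ1 : ρ < 1) (C : ℝ) :
    Summable (fun k : ℕ => (2 * (k:ℝ) + 1) * ρ ^ k * C) := by
  apply Summable.mul_right
  have h1 : Summable (fun k : ℕ => (k:ℝ) ^ 1 * ρ ^ k) :=
    summable_pow_mul_geometric_of_norm_lt_one 1 (by rw [Real.norm_eq_abs, abs_of_nonneg hρ0]; exact hρ1)
  have h2 : Summable (fun k : ℕ => ρ ^ k) :=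
    summable_geometric_of_lt_one hρ0 hρ1
  have := (h1.mul_left 2).add h2
  convert this using 2 with k
  ring


/-- Termwise integration of the asymptotic SINR density (Theorem 2):
for `b > 0`, `0 ≤ ρ < 1` and `z ≥ 0`,
`∫₀^z (1−ρ) b ∑ₖ ((2k+1)!/(k!)²)(ρb)ᵏ xᵏ/(x+b)^{2k+2} dx
  = (1−ρ) b ∑ₖ ((2k+1)!/(k!)²)(ρb)ᵏ ∑ᵢ C(k,i)(−b)^{k−i}/(i−2k−1)
      ((z+b)^{i−2k−1} − b^{i−2k−1})`,
with the series on both sides convergent. -/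
theorem cdf_series_integral (b ρ : ℝ) (hb : 0 < b) (hρ0 : 0 ≤ ρ) (hρ1 : ρ < 1)
    (z : ℝ) (hz : 0 ≤ z) :
    (∀ x : ℝ, 0 ≤ x → Summable fun k : ℕ =>
        (Nat.factorial (2 * k + 1) : ℝ) / (Nat.factorial k : ℝ) ^ 2 *
          (ρ * b) ^ k * x ^ k / (x + b) ^ (2 * k + 2)) ∧
    Summable (fun k : ℕ =>
        (Nat.factorial (2 * k + 1) : ℝ) / (Nat.factorial k : ℝ) ^ 2 * (ρ * b) ^ k *
          ∑ i ∈ Finset.range (k + 1),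
            (k.choose i : ℝ) * (-b) ^ (k - i) / ((i : ℝ) - 2 * k - 1) *
              ((z + b) ^ ((i : ℤ) - 2 * k - 1) - b ^ ((i : ℤ) - 2 * k - 1))) ∧
    (∫ x in (0:ℝ)..z, (1 - ρ) * b *
        ∑' k : ℕ, (Nat.factorial (2 * k + 1) : ℝ) / (Nat.factorial k : ℝ) ^ 2 *
          (ρ * b) ^ k * x ^ k / (x + b) ^ (2 * k + 2)) =
      (1 - ρ) * b *
        ∑' k : ℕ, (Nat.factorial (2 * k + 1) : ℝ) / (Nat.factorial k : ℝ) ^ 2 *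
          (ρ * b) ^ k *
          ∑ i ∈ Finset.range (k + 1),
            (k.choose i : ℝ) * (-b) ^ (k - i) / ((i : ℝ) - 2 * k - 1) *
              ((z + b) ^ ((i : ℤ) - 2 * k - 1) - b ^ ((i : ℤ) - 2 * k - 1)) := by
  set f : ℕ → ℝ → ℝ := fun k x =>
    (Nat.factorial (2 * k + 1) : ℝ) / (Nat.factorial k : ℝ) ^ 2 *
      (ρ * b) ^ k * x ^ k / (x + b) ^ (2 * k + 2) with hfdef
  have hfnonneg : ∀ k : ℕ, ∀ x : ℝ, 0 ≤ x → 0 ≤ f k x := by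
    intro k x hx
    apply div_nonneg _ (by positivity)
    exact mul_nonneg (mul_nonneg (by positivity)
      (pow_nonneg (mul_nonneg hρ0 hb.le) k)) (pow_nonneg hx k)
  -- first conjunct
  have h1 : ∀ x : ℝ, 0 ≤ x → Summable fun k : ℕ => f k x := by
    intro x hx
    apply Summable.of_nonneg_of_le (fun k => hfnonneg k x hx)
      (fun k => aux_bound b ρ hb hρ0 k x hx)
    exact (aux_summable_bound ρ hρ0 hρ1 (1 / b ^ 2)).congr
      (fun k => by rw [mul_one_div])
  -- integrability of each term on Ioc 0 z
  have hcont : ∀ k : ℕ, ContinuousOn (f k) (Set.Icc 0 z) := by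
    intro k
    apply ContinuousOn.div
    · exact (continuousOn_const.mul (continuousOn_pow k))
    · exact (continuousOn_id.add continuousOn_const).pow _
    · intro x hx
      have : 0 ≤ x := hx.1
      exact pow_ne_zero _ (by dsimp; linarith)
  have hInt : ∀ k : ℕ, IntegrableOn (f k) (Set.Ioc 0 z) :=
    fun k => ((hcont k).integrableOn_Icc).mono_set Set.Ioc_subset_Icc_self
  -- value of termwise integral
  have hval : ∀ k : ℕ, ∫ x in Set.Ioc (0:ℝ) z, f k x =
      (Nat.factorial (2 * k + 1) : ℝ) / (Nat.factorial k : ℝ) ^ 2 * (ρ * b) ^ k *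
        ∑ i ∈ Finset.range (k + 1),
          (k.choose i : ℝ) * (-b) ^ (k - i) / ((i : ℝ) - 2 * k - 1) *
            ((z + b) ^ ((i : ℤ) - 2 * k - 1) - b ^ ((i : ℤ) - 2 * k - 1)) := by
    intro k
    have h1' : ∫ x in Set.Ioc (0:ℝ) z, f k x = ∫ x in (0:ℝ)..z, f k x :=
      (intervalIntegral.integral_of_le hz).symm
    rw [h1']
    have h2' : ∀ x : ℝ, f k x =
        ((Nat.factorial (2 * k + 1) : ℝ) / (Nat.factorial k : ℝ) ^ 2 * (ρ * b) ^ k) *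
          (x ^ k / (x + b) ^ (2 * k + 2)) := fun x => by rw [hfdef]; ring
    simp_rw [h2']
    rw [intervalIntegral.integral_const_mul, aux_antideriv b hb k z hz]
  -- bound on termwise integrals
  have hIntBound : ∀ k : ℕ, ∫ x in Set.Ioc (0:ℝ) z, f k x ≤ (2 * (k:ℝ) + 1) * ρ ^ k * (z / b ^ 2) := by
    intro k
    have hconst : IntegrableOn (fun _ : ℝ => (2 * (k:ℝ) + 1) * ρ ^ k / b ^ 2) (Set.Ioc 0 z) := by
      exact integrableOn_const (by rw [Real.volume_Ioc]; exact ENNReal.ofReal_ne_top)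
    calc ∫ x in Set.Ioc (0:ℝ) z, f k x
        ≤ ∫ _x in Set.Ioc (0:ℝ) z, (2 * (k:ℝ) + 1) * ρ ^ k / b ^ 2 := by
          apply setIntegral_mono_on (hInt k) hconst measurableSet_Ioc
          intro x hx
          exact aux_bound b ρ hb hρ0 k x hx.1.le
      _ = (2 * (k:ℝ) + 1) * ρ ^ k * (z / b ^ 2) := by
          rw [setIntegral_const, Real.volume_real_Ioc, smul_eq_mul]
          rw [max_eq_left (by linarith)]
          ring
  have hIntNonneg : ∀ k : ℕ, 0 ≤ ∫ x in Set.Ioc (0:ℝ) z, f k x :=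
    fun k => setIntegral_nonneg measurableSet_Ioc (fun x hx => hfnonneg k x hx.1.le)
  have hSumInt : Summable (fun k : ℕ => ∫ x in Set.Ioc (0:ℝ) z, f k x) :=
    Summable.of_nonneg_of_le hIntNonneg hIntBound (aux_summable_bound ρ hρ0 hρ1 (z / b ^ 2))
  -- second conjunct
  have h2 : Summable (fun k : ℕ =>
      (Nat.factorial (2 * k + 1) : ℝ) / (Nat.factorial k : ℝ) ^ 2 * (ρ * b) ^ k *
        ∑ i ∈ Finset.range (k + 1),
          (k.choose i : ℝ) * (-b) ^ (k - i) / ((i : ℝ) - 2 * k - 1) *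
            ((z + b) ^ ((i : ℤ) - 2 * k - 1) - b ^ ((i : ℤ) - 2 * k - 1))) :=
    hSumInt.congr hval
  refine ⟨h1, h2, ?_⟩
  -- norm integrals
  have hnorm : ∀ k : ℕ, ∫ x in Set.Ioc (0:ℝ) z, ‖f k x‖ = ∫ x in Set.Ioc (0:ℝ) z, f k x := by
    intro k
    apply setIntegral_congr_fun measurableSet_Ioc
    intro x hx
    exact Real.norm_of_nonneg (hfnonneg k x hx.1.le)
  have hswap : ∑' k : ℕ, ∫ x in Set.Ioc (0:ℝ) z, f k x
      = ∫ x in Set.Ioc (0:ℝ) z, ∑' k : ℕ, f k x := by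
    apply integral_tsum_of_summable_integral_norm hInt
    exact hSumInt.congr (fun k => (hnorm k).symm)
  calc (∫ x in (0:ℝ)..z, (1 - ρ) * b * ∑' k : ℕ, f k x)
      = (1 - ρ) * b * ∫ x in (0:ℝ)..z, ∑' k : ℕ, f k x := by
        rw [intervalIntegral.integral_const_mul]
    _ = (1 - ρ) * b * ∫ x in Set.Ioc (0:ℝ) z, ∑' k : ℕ, f k x := by
        rw [intervalIntegral.integral_of_le hz]
    _ = (1 - ρ) * b * ∑' k : ℕ, ∫ x in Set.Ioc (0:ℝ) z, f k x := by rw [hswap]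
    _ = _ := by rw [tsum_congr hval]
end
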